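/- arXiv:2308.01418 — 2 statements merged into one kernel-verified Lean document; each statement's English description precedes it below -/
import Mathlib

section
/- For an i.i.d. sequence (A_t, B_t)_{t∈ℤ} with A_t, B_t > 0 and E log A_1 < 0, E log⁺ B_1 < ∞, the stochastic recurrence equation X_t = A_t X_{t−1} + B_t has a unique stationary solution given by X_t = B_t + ∑_{j=−∞}^{t−1} A_t A_{t−1} ⋯ A_{j+1} B_j, where the series converges almost surely. -/
open MeasureTheory ProbabilityTheory

section SREaux

open Filter Finset Topology ENNReal

lemma Icc_int_eq_map (t : ℤ) (m : ℕ) :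
    Finset.Icc (t - (m : ℤ)) t
      = (Finset.range (m + 1)).map
          ⟨fun j : ℕ => t - (j : ℤ),
            fun a b h => by simpa using h⟩ := by
  ext k
  simp only [Finset.mem_Icc, Finset.mem_map, Finset.mem_range, Function.Embedding.coeFn_mk]
  constructor
  · rintro ⟨h1, h2⟩
    refine ⟨(t - k).toNat, by omega, by change t - ((t - k).toNat : ℤ) = k; omega⟩
  · rintro ⟨j, hj, rfl⟩
    change t - (m : ℤ) ≤ t - (j : ℤ) ∧ t - (j : ℤ) ≤ t
    omega

lemma key_as {Ω : Type*} [MeasurableSpace Ω] (P : Measure Ω) [IsProbabilityMeasure P]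
    (A B : ℤ → Ω → ℝ)
    (hmeas : ∀ t, Measurable fun ω => (A t ω, B t ω))
    (hpos : ∀ t ω, 0 < A t ω ∧ 0 < B t ω)
    (hiid : iIndepFun (m := fun _ : ℤ => (inferInstance : MeasurableSpace (ℝ × ℝ)))
      (fun t ω => (A t ω, B t ω)) P)
    (hid : ∀ s t : ℤ, IdentDistrib (fun ω => (A s ω, B s ω)) (fun ω => (A t ω, B t ω)) P P)
    (hlogA_int : Integrable (fun ω => Real.log (A 1 ω)) P)
    (hlogA : (∫ ω, Real.log (A 1 ω) ∂P) < 0)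
    (hlogB : Integrable (fun ω => max (Real.log (B 1 ω)) 0) P) (t : ℤ) :
    ∀ᵐ ω ∂P,
      (Summable fun m : ℕ =>
        (∏ k ∈ Finset.Icc (t - (m : ℤ)) t, A k ω) * B (t - 1 - (m : ℤ)) ω) ∧
      Tendsto (fun n : ℕ => ∏ k ∈ Finset.Icc (t - (n : ℤ)) t, A k ω) atTop (𝓝 0) := by
  set L : ℝ := ∫ ω, Real.log (A 1 ω) ∂P with hLdef
  have hφ : Measurable fun p : ℝ × ℝ => Real.log p.1 :=
    Real.measurable_log.comp measurable_fst
  have hψ : Measurable fun p : ℝ × ℝ => max (Real.log p.2) 0 :=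
    (Real.measurable_log.comp measurable_snd).max measurable_const
  set ξ : ℕ → Ω → ℝ := fun j ω => Real.log (A (t - (j : ℤ)) ω) with hξdef
  set η : ℕ → Ω → ℝ := fun j ω => max (Real.log (B (t - 1 - (j : ℤ)) ω)) 0 with hηdef
  -- SLLN for ξ
  have hξid : ∀ j, IdentDistrib (ξ j) (ξ 0) P P := fun j =>
    (hid (t - (j : ℤ)) (t - ((0 : ℕ) : ℤ))).comp hφ
  have hξ1 : IdentDistrib (ξ 0) (fun ω => Real.log (A 1 ω)) P P :=
    (hid (t - ((0 : ℕ) : ℤ)) 1).comp hφ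
  have hξint : Integrable (ξ 0) P := hξ1.integrable_iff.mpr hlogA_int
  have hξindep : Pairwise (Function.onFun (IndepFun · · P) ξ) := by
    intro i j hij
    exact (hiid.indepFun (show t - (i : ℤ) ≠ t - (j : ℤ) by omega)).comp hφ hφ
  have hξE : ∫ ω, ξ 0 ω ∂P = L := hξ1.integral_eq
  have hslln1 := strong_law_ae_real ξ hξint hξindep hξid
  rw [show P[ξ 0] = L from hξE] at hslln1
  -- SLLN for η
  have hηid : ∀ j, IdentDistrib (η j) (η 0) P P := fun j =>
    (hid (t - 1 - (j : ℤ)) (t - 1 - ((0 : ℕ) : ℤ))).comp hψ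
  have hη1 : IdentDistrib (η 0) (fun ω => max (Real.log (B 1 ω)) 0) P P :=
    (hid (t - 1 - ((0 : ℕ) : ℤ)) 1).comp hψ
  have hηint : Integrable (η 0) P := hη1.integrable_iff.mpr hlogB
  have hηindep : Pairwise (Function.onFun (IndepFun · · P) η) := by
    intro i j hij
    exact (hiid.indepFun (show t - 1 - (i : ℤ) ≠ t - 1 - (j : ℤ) by omega)).comp hψ hψ
  have hslln2 := strong_law_ae_real η hηint hηindep hηid
  set Lb : ℝ := P[η 0] with hLbdef
  filter_upwards [hslln1, hslln2] with ω h1 h2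
  -- notation
  set Q : ℕ → ℝ := fun n => ∏ k ∈ Finset.Icc (t - (n : ℤ)) t, A k ω with hQdef
  have hQpos : ∀ n, 0 < Q n := fun n =>
    Finset.prod_pos fun k _ => (hpos k ω).1
  have hlogQ : ∀ n : ℕ, Real.log (Q n) = ∑ j ∈ Finset.range (n + 1), ξ j ω := by
    intro n
    simp only [hQdef]
    rw [Icc_int_eq_map t n, Finset.prod_map]
    rw [Real.log_prod]
    · rfl
    · intro j _
      exact ne_of_gt (hpos _ ω).1
  -- the Cesàro limits
  have hsξ : Tendsto (fun m : ℕ => (∑ j ∈ Finset.range (m + 1), ξ j ω) / (m + 1))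
      atTop (𝓝 L) := by
    have := h1.comp (tendsto_add_atTop_nat 1)
    refine this.congr fun m => ?_
    simp [Function.comp]
  have hsη : Tendsto (fun m : ℕ => (∑ j ∈ Finset.range m, η j ω) / m) atTop (𝓝 Lb) := h2
  -- η m / (m+1) → 0
  have hdη : Tendsto (fun m : ℕ => η m ω / (m + 1)) atTop (𝓝 0) := by
    have hA' : Tendsto (fun m : ℕ => (∑ j ∈ Finset.range (m + 1), η j ω) / (m + 1))
        atTop (𝓝 Lb) := by
      have := h2.comp (tendsto_add_atTop_nat 1)
      refine this.congr fun m => ?_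
      simp [Function.comp]
    have hB' : Tendsto (fun m : ℕ => (∑ j ∈ Finset.range m, η j ω) / (m + 1))
        atTop (𝓝 Lb) := by
      have hratio : Tendsto (fun m : ℕ => (m : ℝ) / (m + 1)) atTop (𝓝 1) := by
        have h0 : Tendsto (fun m : ℕ => 1 - 1 / ((m : ℝ) + 1)) atTop (𝓝 (1 - 0)) :=
          tendsto_const_nhds.sub tendsto_one_div_add_atTop_nhds_zero_nat
        rw [sub_zero] at h0
        refine h0.congr fun m => ?_
        have hm : ((m : ℝ) + 1) ≠ 0 := by positivity
        field_simp
        ring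
      have := h2.mul hratio
      rw [mul_one] at this
      refine this.congr fun m => ?_
      rcases Nat.eq_zero_or_pos m with rfl | hm
      · simp
      · have hm : (m : ℝ) ≠ 0 := by positivity
        field_simp
    have := hA'.sub hB'
    rw [sub_self] at this
    refine this.congr fun m => ?_
    rw [Finset.sum_range_succ]
    ring
  -- combined limit
  have hv : Tendsto (fun m : ℕ => Real.log (Q m) / (m + 1) + η m ω / (m + 1))
      atTop (𝓝 L) := by
    have := hsξ.add hdη
    rw [add_zero] at this
    refine this.congr fun m => ?_
    rw [hlogQ m]
  -- Q n → 0
  have hQ0 : Tendsto Q atTop (𝓝 0) := by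
    have hlog : Tendsto (fun n : ℕ => Real.log (Q n)) atTop atBot := by
      have hs : Tendsto (fun n : ℕ => Real.log (Q n) / (n + 1)) atTop (𝓝 L) := by
        refine hsξ.congr fun m => ?_
        rw [hlogQ m]
      have hn1 : Tendsto (fun n : ℕ => (n : ℝ) + 1) atTop atTop :=
        tendsto_atTop_add_const_right _ _ tendsto_natCast_atTop_atTop
      have := (hs.neg_mul_atTop hlogA) hn1
      refine this.congr fun n => ?_
      have : ((n : ℝ) + 1) ≠ 0 := by positivity
      field_simp
    have := Real.tendsto_exp_atBot.comp hlog
    refine this.congr fun n => ?_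
    exact Real.exp_log (hQpos n)
  refine ⟨?_, hQ0⟩
  -- summability
  set f : ℕ → ℝ := fun m => Q m * B (t - 1 - (m : ℤ)) ω with hfdef
  have hfpos : ∀ m, 0 < f m := fun m => mul_pos (hQpos m) (hpos _ ω).2
  have hflog : ∀ m : ℕ, Real.log (f m) / (m + 1)
      ≤ Real.log (Q m) / (m + 1) + η m ω / (m + 1) := by
    intro m
    rw [hfdef]
    have hlogf : Real.log (Q m * B (t - 1 - (m : ℤ)) ω)
        = Real.log (Q m) + Real.log (B (t - 1 - (m : ℤ)) ω) :=
      Real.log_mul (ne_of_gt (hQpos m)) (ne_of_gt (hpos _ ω).2)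
    rw [hlogf, add_div]
    gcongr
    exact le_max_left _ _
  have hL2 : L < L / 2 := by linarith
  have hev : ∀ᶠ m in atTop,
      Real.log (Q m) / (m + 1) + η m ω / (m + 1) < L / 2 :=
    hv.eventually_lt_const hL2
  obtain ⟨N, hN⟩ := hev.exists_forall_of_atTop
  set r : ℝ := Real.exp (L / 2) with hrdef
  have hr0 : 0 < r := Real.exp_pos _
  have hr1 : r < 1 := Real.exp_lt_one_iff.mpr (by linarith)
  have hbound : ∀ m ≥ N, f m ≤ r ^ (m + 1) := by
    intro m hm
    have h1' : Real.log (f m) / (m + 1) < L / 2 := lt_of_le_of_lt (hflog m) (hN m hm)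
    have hm1 : (0 : ℝ) < (m : ℝ) + 1 := by positivity
    have h2' : Real.log (f m) < (L / 2) * ((m : ℝ) + 1) := by
      rw [div_lt_iff₀ hm1] at h1'
      linarith
    have : f m = Real.exp (Real.log (f m)) := (Real.exp_log (hfpos m)).symm
    rw [this]
    calc Real.exp (Real.log (f m)) ≤ Real.exp ((L / 2) * ((m : ℝ) + 1)) :=
          Real.exp_le_exp.mpr h2'.le
      _ = r ^ (m + 1) := by
          rw [hrdef, ← Real.exp_nat_mul]
          congr 1
          push_cast
          ring
  have hgeom : Summable fun m : ℕ => r ^ (m + N + 1) := by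
    have h := (summable_geometric_of_lt_one hr0.le hr1).mul_left (r ^ (N + 1))
    refine h.congr fun m => ?_
    rw [← pow_add]
    congr 1
    ring
  rw [← summable_nat_add_iff N]
  refine Summable.of_nonneg_of_le (fun m => (hfpos _).le) (fun m => ?_) hgeom
  exact hbound (m + N) (Nat.le_add_left N m)

lemma Icc_insert_top (t : ℤ) (n : ℕ) :
    Finset.Icc (t - ((n : ℤ) + 1)) t = insert t (Finset.Icc (t - 1 - (n : ℤ)) (t - 1)) := by
  ext k
  simp only [Finset.mem_Icc, Finset.mem_insert]
  omega

lemma measurable_tsum_nonneg {α : Type*} [MeasurableSpace α] {f : ℕ → α → ℝ}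
    (hf : ∀ i, Measurable (f i)) (h0 : ∀ i x, 0 ≤ f i x) :
    Measurable fun x => ∑' i, f i x := by
  have key : ∀ x, ∑' i, f i x = (∑' i, ENNReal.ofReal (f i x)).toReal := by
    intro x
    by_cases h : Summable fun i => f i x
    · rw [← ENNReal.ofReal_tsum_of_nonneg (fun i => h0 i x) h,
        ENNReal.toReal_ofReal (tsum_nonneg fun i => h0 i x)]
    · rw [tsum_eq_zero_of_not_summable h]
      have htop : ∑' i, ENNReal.ofReal (f i x) = ⊤ := by
        by_contra htop
        refine h ?_
        have := ENNReal.summable_toReal htop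
        refine this.congr fun i => ?_
        rw [ENNReal.toReal_ofReal (h0 i x)]
      simp [htop]
  simp only [key]
  exact (Measurable.ennreal_tsum fun i => (hf i).ennreal_ofReal).ennreal_toReal

lemma series_recur {Ω : Type*} (A B : ℤ → Ω → ℝ)
    (hpos : ∀ t ω, 0 < A t ω ∧ 0 < B t ω) (t : ℤ) (ω : Ω)
    (hsum : Summable fun m : ℕ =>
      (∏ k ∈ Finset.Icc (t - (m : ℤ)) t, A k ω) * B (t - 1 - (m : ℤ)) ω) :
    (B t ω + ∑' m : ℕ, (∏ k ∈ Finset.Icc (t - (m : ℤ)) t, A k ω) * B (t - 1 - (m : ℤ)) ω)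
      = A t ω *
          (B (t - 1) ω +
            ∑' m : ℕ, (∏ k ∈ Finset.Icc (t - 1 - (m : ℤ)) (t - 1), A k ω) *
              B (t - 1 - 1 - (m : ℤ)) ω)
        + B t ω := by
  set f : ℕ → ℝ := fun m =>
    (∏ k ∈ Finset.Icc (t - (m : ℤ)) t, A k ω) * B (t - 1 - (m : ℤ)) ω with hfdef
  set g : ℕ → ℝ := fun m =>
    (∏ k ∈ Finset.Icc (t - 1 - (m : ℤ)) (t - 1), A k ω) * B (t - 1 - 1 - (m : ℤ)) ω with hgdef
  have h0 : f 0 = A t ω * B (t - 1) ω := by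
    simp [hfdef]
  have hsh : ∀ m : ℕ, f (m + 1) = A t ω * g m := by
    intro m
    have hc : t - ((m + 1 : ℕ) : ℤ) = t - ((m : ℤ) + 1) := by push_cast; ring
    have hI : Finset.Icc (t - ((m + 1 : ℕ) : ℤ)) t
        = insert t (Finset.Icc (t - 1 - (m : ℤ)) (t - 1)) := by
      rw [hc]; exact Icc_insert_top t m
    have hnot : t ∉ Finset.Icc (t - 1 - (m : ℤ)) (t - 1) := by
      simp only [Finset.mem_Icc]; omega
    have hB : t - 1 - ((m + 1 : ℕ) : ℤ) = t - 1 - 1 - (m : ℤ) := by push_cast; ring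
    simp only [hfdef, hgdef, hI, hB, Finset.prod_insert hnot]
    ring
  have hsplit : ∑' m, f m = f 0 + ∑' m, f (m + 1) := hsum.tsum_eq_zero_add
  have htail : ∑' m, f (m + 1) = A t ω * ∑' m, g m := by
    rw [tsum_congr hsh, tsum_mul_left]
  show B t ω + ∑' m, f m = A t ω * (B (t - 1) ω + ∑' m, g m) + B t ω
  rw [hsplit, htail, h0]
  ring

lemma stationarity {Ω : Type*} [MeasurableSpace Ω] (P : Measure Ω) [IsProbabilityMeasure P]
    (A B : ℤ → Ω → ℝ)
    (hmeas : ∀ t, Measurable fun ω => (A t ω, B t ω))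
    (hpos : ∀ t ω, 0 < A t ω ∧ 0 < B t ω)
    (hiid : iIndepFun (m := fun _ : ℤ => (inferInstance : MeasurableSpace (ℝ × ℝ)))
      (fun t ω => (A t ω, B t ω)) P)
    (hid : ∀ s t : ℤ, IdentDistrib (fun ω => (A s ω, B s ω)) (fun ω => (A t ω, B t ω)) P P)
    (s : ℤ) :
    IdentDistrib
      (fun ω (t : ℤ) =>
        B t ω + ∑' m : ℕ, (∏ k ∈ Finset.Icc (t - (m : ℤ)) t, A k ω) * B (t - 1 - (m : ℤ)) ω)
      (fun ω (t : ℤ) =>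
        B (t + s) ω + ∑' m : ℕ, (∏ k ∈ Finset.Icc (t + s - (m : ℤ)) (t + s), A k ω) *
          B (t + s - 1 - (m : ℤ)) ω)
      P P := by
  classical
  set pairs : Ω → ℤ → ℝ × ℝ := fun ω t => (A t ω, B t ω) with hpairs
  set pairsS : Ω → ℤ → ℝ × ℝ := fun ω t => (A (t + s) ω, B (t + s) ω) with hpairsS
  have hmp : Measurable pairs := measurable_pi_lambda _ fun t => hmeas t
  have hmpS : Measurable pairsS := measurable_pi_lambda _ fun t => hmeas (t + s)
  -- equality of laws on the path space
  have hmap : Measure.map pairs P = Measure.map pairsS P := by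
    haveI h1 : IsProbabilityMeasure (Measure.map pairs P) :=
      Measure.isProbabilityMeasure_map hmp.aemeasurable
    haveI h2 : IsProbabilityMeasure (Measure.map pairsS P) :=
      Measure.isProbabilityMeasure_map hmpS.aemeasurable
    refine ext_of_generate_finite _ generateFrom_squareCylinders.symm
      (isPiSystem_squareCylinders (fun _ => MeasurableSpace.isPiSystem_measurableSet)
        (fun _ => by simp only [Set.mem_setOf_eq]; exact MeasurableSet.univ)) ?_ ?_
    · rintro S ⟨I, tset, htm, rfl⟩
      simp only [Set.mem_univ_pi, Set.mem_setOf_eq] at htm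
      have hS : MeasurableSet ((I : Set ℤ).pi tset) :=
        MeasurableSet.pi (Finset.countable_toSet _) fun i _ => htm i
      rw [Measure.map_apply hmp hS, Measure.map_apply hmpS hS]
      have hpre1 : pairs ⁻¹' ((I : Set ℤ).pi tset)
          = ⋂ i ∈ I, (fun ω => (A i ω, B i ω)) ⁻¹' tset i := by
        ext ω
        simp [hpairs, Set.mem_pi]
      have hpre2 : pairsS ⁻¹' ((I : Set ℤ).pi tset)
          = ⋂ j ∈ I.map (addRightEmbedding s), (fun ω => (A j ω, B j ω)) ⁻¹' tset (j - s) := by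
        ext ω
        constructor
        · intro h
          refine Set.mem_iInter₂.2 fun j hj => ?_
          rw [Finset.mem_map] at hj
          obtain ⟨i, hi, rfl⟩ := hj
          simp only [addRightEmbedding_apply, Set.mem_preimage]
          rw [show (addRightEmbedding s) i - s = i from add_sub_cancel_right i s]
          exact Set.mem_pi.mp (Set.mem_preimage.mp h) i hi
        · intro h
          rw [Set.mem_preimage, Set.mem_pi]
          intro i hi
          have hmem : i + s ∈ I.map (addRightEmbedding s) := by
            rw [Finset.mem_map]
            exact ⟨i, hi, rfl⟩
          have := Set.mem_iInter₂.1 h (i + s) hmem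
          rw [Set.mem_preimage, show i + s - s = i from by ring] at this
          exact this
      rw [hpre1, hpre2]
      rw [hiid.measure_inter_preimage_eq_mul I (fun i _ => htm i),
        hiid.measure_inter_preimage_eq_mul (I.map (addRightEmbedding s))
          (sets := fun j => tset (j - s)) (fun j _ => htm (j - s))]
      rw [Finset.prod_map]
      refine Finset.prod_congr rfl fun i _ => ?_
      simp only [addRightEmbedding_apply]
      rw [show (addRightEmbedding s) i - s = i from add_sub_cancel_right i s]
      exact (hid i (i + s)).measure_mem_eq (htm i)
    · simp
  have hseq : IdentDistrib pairs pairsS P P :=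
    ⟨hmp.aemeasurable, hmpS.aemeasurable, hmap⟩
  -- the measurable functional
  set Φ : (ℤ → ℝ × ℝ) → ℤ → ℝ := fun c u =>
    (c u).2 + ∑' m : ℕ,
      (∏ k ∈ Finset.Icc (u - (m : ℤ)) u, max ((c k).1) 0) * max ((c (u - 1 - (m : ℤ))).2) 0
    with hΦdef
  have hΦ : Measurable Φ := by
    refine measurable_pi_lambda _ fun u => ?_
    refine Measurable.add ?_ ?_
    · exact measurable_snd.comp (measurable_pi_apply u)
    · refine measurable_tsum_nonneg (fun m => ?_) (fun m c => ?_)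
      · refine Measurable.mul ?_ ?_
        · refine Finset.measurable_prod _ fun k _ => ?_
          exact (measurable_fst.comp (measurable_pi_apply k)).max measurable_const
        · exact (measurable_snd.comp (measurable_pi_apply _)).max measurable_const
      · have h1 : (0:ℝ) ≤ ∏ k ∈ Finset.Icc (u - (m : ℤ)) u, max ((c k).1) 0 :=
          Finset.prod_nonneg fun k _ => le_max_right _ _
        exact mul_nonneg h1 (le_max_right _ _)
  have e1 : (fun ω (t : ℤ) =>
      B t ω + ∑' m : ℕ, (∏ k ∈ Finset.Icc (t - (m : ℤ)) t, A k ω) * B (t - 1 - (m : ℤ)) ω)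
      = Φ ∘ pairs := by
    funext ω t
    simp only [Function.comp_apply, hΦdef, hpairs]
    congr 1
    refine tsum_congr fun m => ?_
    congr 1
    · refine Finset.prod_congr rfl fun k _ => ?_
      exact (max_eq_left (hpos k ω).1.le).symm
    · exact (max_eq_left (hpos _ ω).2.le).symm
  have e2 : (fun ω (t : ℤ) =>
      B (t + s) ω + ∑' m : ℕ, (∏ k ∈ Finset.Icc (t + s - (m : ℤ)) (t + s), A k ω) *
        B (t + s - 1 - (m : ℤ)) ω)
      = Φ ∘ pairsS := by
    funext ω t
    simp only [Function.comp_apply, hΦdef, hpairsS]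
    congr 1
    refine tsum_congr fun m => ?_
    have hIcc : Finset.Icc (t + s - (m : ℤ)) (t + s)
        = (Finset.Icc (t - (m : ℤ)) t).map (addRightEmbedding s) := by
      rw [Finset.map_add_right_Icc]
      congr 1
      ring
    congr 1
    · rw [hIcc, Finset.prod_map]
      refine Finset.prod_congr rfl fun k _ => ?_
      simp only [addRightEmbedding_apply]
      exact (max_eq_left (hpos _ ω).1.le).symm
    · have : t + s - 1 - (m : ℤ) = t - 1 - (m : ℤ) + s := by ring
      rw [this]
      exact (max_eq_left (hpos _ ω).2.le).symm
  rw [e1, e2]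
  exact hseq.comp hΦ

lemma Icc_insert_bot' (t : ℤ) (n : ℕ) :
    Finset.Icc (t - ((n : ℤ) + 1)) t = insert (t - ((n : ℤ) + 1)) (Finset.Icc (t - (n : ℤ)) t) := by
  ext k
  simp only [Finset.mem_Icc, Finset.mem_insert]
  omega

lemma uniqueness {Ω : Type*} [MeasurableSpace Ω] (P : Measure Ω) [IsProbabilityMeasure P]
    (A B : ℤ → Ω → ℝ)
    (hmeas : ∀ t, Measurable fun ω => (A t ω, B t ω))
    (key : ∀ t : ℤ, ∀ᵐ ω ∂P,
      (Summable fun m : ℕ =>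
        (∏ k ∈ Finset.Icc (t - (m : ℤ)) t, A k ω) * B (t - 1 - (m : ℤ)) ω) ∧
      Tendsto (fun n : ℕ => ∏ k ∈ Finset.Icc (t - (n : ℤ)) t, A k ω) atTop (𝓝 0))
    (Y : ℤ → Ω → ℝ) (hYmeas : ∀ t, Measurable (Y t))
    (hYrec : ∀ t : ℤ, ∀ᵐ ω ∂P, Y t ω = A t ω * Y (t - 1) ω + B t ω)
    (hYstat : ∀ s : ℤ,
      IdentDistrib (fun ω (t : ℤ) => (Y t ω, A t ω, B t ω))
        (fun ω (t : ℤ) => (Y (t + s) ω, A (t + s) ω, B (t + s) ω)) P P)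
    (t : ℤ) :
    Y t =ᵐ[P] fun ω =>
      B t ω + ∑' m : ℕ, (∏ k ∈ Finset.Icc (t - (m : ℤ)) t, A k ω) * B (t - 1 - (m : ℤ)) ω := by
  classical
  have hA_meas : ∀ u : ℤ, Measurable (A u) := fun u => measurable_fst.comp (hmeas u)
  set Q : ℕ → Ω → ℝ := fun n ω => ∏ k ∈ Finset.Icc (t - (n : ℤ)) t, A k ω with hQdef
  set f : ℕ → Ω → ℝ := fun m ω => Q m ω * B (t - 1 - (m : ℤ)) ω with hfdef
  set R : ℕ → Ω → ℝ := fun n ω => Q n ω * Y (t - 1 - (n : ℤ)) ω with hRdef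
  set Z : Ω → ℝ := fun ω => Y t ω - B t ω - ∑' m, f m ω with hZdef
  have hQmeas : ∀ n, Measurable (Q n) := fun n =>
    Finset.measurable_prod _ fun k _ => hA_meas k
  have hRmeas : ∀ n, Measurable (R n) := fun n => (hQmeas n).mul (hYmeas _)
  -- a.e. recurrence for all shifts
  have hrec_all : ∀ᵐ ω ∂P, ∀ n : ℕ,
      Y (t - (n : ℤ)) ω = A (t - (n : ℤ)) ω * Y (t - (n : ℤ) - 1) ω + B (t - (n : ℤ)) ω := by
    rw [ae_all_iff]
    intro n
    exact hYrec (t - (n : ℤ))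
  -- the iterated identity
  have hiter : ∀ᵐ ω ∂P, ∀ n : ℕ,
      Y t ω = B t ω + (∑ m ∈ Finset.range n, f m ω) + R n ω := by
    filter_upwards [hrec_all] with ω hω
    intro n
    induction n with
    | zero =>
      have h0 := hω 0
      simp only [Nat.cast_zero, sub_zero] at h0 ⊢
      have hQ0 : Q 0 ω = A t ω := by
        simp [hQdef]
      simp only [hRdef, Finset.range_zero, Finset.sum_empty, hQ0, Nat.cast_zero, sub_zero]
      rw [h0]
      ring
    | succ n ih =>
      have hstep := hω (n + 1)
      have hc1 : t - ((n + 1 : ℕ) : ℤ) = t - 1 - (n : ℤ) := by push_cast; ring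
      have hc2 : t - ((n + 1 : ℕ) : ℤ) - 1 = t - 1 - ((n + 1 : ℕ) : ℤ) := by push_cast; ring
      rw [hc2, hc1] at hstep
      -- Q (n+1) = A (t - (n+1)) * Q n
      have hQs : Q (n + 1) ω = A (t - 1 - (n : ℤ)) ω * Q n ω := by
        have hcast : t - ((n + 1 : ℕ) : ℤ) = t - ((n : ℤ) + 1) := by push_cast; ring
        have hnot : t - ((n : ℤ) + 1) ∉ Finset.Icc (t - (n : ℤ)) t := by
          simp only [Finset.mem_Icc]; omega
        have : Q (n + 1) ω = ∏ k ∈ Finset.Icc (t - ((n : ℤ) + 1)) t, A k ω := by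
          simp only [hQdef]
          rw [hcast]
        rw [this, Icc_insert_bot' t n, Finset.prod_insert hnot,
          show t - ((n : ℤ) + 1) = t - 1 - (n : ℤ) from by ring]
      rw [ih]
      have hR : R n ω = Q n ω * Y (t - 1 - (n : ℤ)) ω := rfl
      rw [hR, hstep]
      rw [Finset.sum_range_succ]
      have hf : f n ω = Q n ω * B (t - 1 - (n : ℤ)) ω := rfl
      have hR' : R (n + 1) ω = Q (n + 1) ω * Y (t - 1 - ((n + 1 : ℕ) : ℤ)) ω := rfl
      rw [hR', hQs, hf]
      ring
  -- a.e. convergence of R to Z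
  have hRZ : ∀ᵐ ω ∂P, Tendsto (fun n => R n ω) atTop (𝓝 (Z ω)) := by
    filter_upwards [hiter, key t] with ω hω hkey
    have hpartial : Tendsto (fun n => ∑ m ∈ Finset.range n, f m ω) atTop
        (𝓝 (∑' m, f m ω)) := hkey.1.hasSum.tendsto_sum_nat
    have heq : (fun n => R n ω) = fun n => Y t ω - B t ω - ∑ m ∈ Finset.range n, f m ω := by
      funext n
      have := hω n
      linarith
    rw [heq]
    exact tendsto_const_nhds.sub hpartial
  -- Q tends to 0 in measure
  have hQ0ae : ∀ᵐ ω ∂P, Tendsto (fun n => Q n ω) atTop (𝓝 0) :=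
    (key t).mono fun ω h => h.2
  have hQ0m : TendstoInMeasure P Q atTop (fun _ => (0 : ℝ)) :=
    tendstoInMeasure_of_tendsto_ae (fun n => (hQmeas n).aestronglyMeasurable) hQ0ae
  -- identical distribution of Y coordinates
  have hYid : ∀ n : ℕ, IdentDistrib (Y (t - 1 - (n : ℤ))) (Y (t - 1)) P P := by
    intro n
    have h := hYstat (-(n : ℤ))
    have hc : Measurable fun g : ℤ → ℝ × ℝ × ℝ => (g (t - 1)).1 :=
      measurable_fst.comp (measurable_pi_apply (t - 1))
    have h2 := h.comp hc
    simp only [Function.comp_def] at h2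
    rw [show t - 1 + -(n : ℤ) = t - 1 - (n : ℤ) from by ring] at h2
    exact h2.symm
  -- the tail of |Y (t-1)| is small
  have htail : Tendsto (fun M : ℕ => P {ω | (M : ℝ) < |Y (t - 1) ω|}) atTop (𝓝 0) := by
    have hms : ∀ M : ℕ, MeasurableSet {ω | (M : ℝ) < |Y (t - 1) ω|} := fun M =>
      measurableSet_lt measurable_const (hYmeas _).abs
    have hanti : Antitone fun M : ℕ => {ω | (M : ℝ) < |Y (t - 1) ω|} := by
      intro M M' hMM' ω hω
      simp only [Set.mem_setOf_eq] at hω ⊢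
      exact lt_of_le_of_lt (Nat.cast_le.mpr hMM') hω
    have h1 := tendsto_measure_iInter_atTop (fun M => (hms M).nullMeasurableSet) hanti
      ⟨0, measure_ne_top P _⟩
    have h0 : (⋂ M : ℕ, {ω | (M : ℝ) < |Y (t - 1) ω|}) = ∅ := by
      ext ω
      simp only [Set.mem_iInter, Set.mem_setOf_eq, Set.mem_empty_iff_false, iff_false,
        not_forall, not_lt]
      exact exists_nat_ge |Y (t - 1) ω|
    rw [h0, measure_empty] at h1
    exact h1
  -- R tends to 0 in measure
  have hRm : TendstoInMeasure P R atTop (fun _ => (0 : ℝ)) := by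
    rw [tendstoInMeasure_iff_dist]
    intro ε hε
    rw [ENNReal.tendsto_atTop_zero]
    intro δ hδ
    by_cases hδ1 : 1 ≤ δ
    · exact ⟨0, fun n _ => le_trans prob_le_one hδ1⟩
    push_neg at hδ1
    have hδ2 : (0 : ℝ≥0∞) < δ / 2 := ENNReal.div_pos hδ.ne' (by norm_num)
    obtain ⟨M0, hM0⟩ := (htail.eventually_lt_const hδ2).exists
    set M : ℕ := M0 + 1 with hMdef
    have hM : P {ω | (M : ℝ) < |Y (t - 1) ω|} < δ / 2 := by
      refine lt_of_le_of_lt (measure_mono ?_) hM0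
      intro ω hω
      simp only [Set.mem_setOf_eq] at hω ⊢
      refine lt_of_le_of_lt ?_ hω
      rw [hMdef]
      push_cast
      linarith
    have hMpos : (0 : ℝ) < (M : ℝ) := by positivity
    have hεM : 0 < ε / (M : ℝ) := div_pos hε hMpos
    have hQε := (tendstoInMeasure_iff_dist.mp hQ0m) (ε / (M : ℝ)) hεM
    obtain ⟨N, hN⟩ := ((hQε.eventually_lt_const hδ2).and (eventually_ge_atTop 0)).exists_forall_of_atTop
    refine ⟨N, fun n hn => ?_⟩
    have hsub : {x | ε ≤ dist (R n x) ((fun _ => (0:ℝ)) x)}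
        ⊆ {x | ε / (M : ℝ) ≤ dist (Q n x) ((fun _ => (0:ℝ)) x)}
          ∪ {ω | (M : ℝ) < |Y (t - 1 - (n : ℤ)) ω|} := by
      intro ω hω
      simp only [Set.mem_setOf_eq, dist_zero_right, Real.norm_eq_abs] at hω
      by_contra hcon
      simp only [Set.mem_union, Set.mem_setOf_eq, dist_zero_right, Real.norm_eq_abs,
        not_or, not_le, not_lt] at hcon
      obtain ⟨h1, h2⟩ := hcon
      have hR : |R n ω| = |Q n ω| * |Y (t - 1 - (n : ℤ)) ω| := by
        rw [hRdef]
        exact abs_mul _ _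
      have : |R n ω| < ε := by
        rw [hR]
        calc |Q n ω| * |Y (t - 1 - (n : ℤ)) ω| ≤ |Q n ω| * M := by
              refine mul_le_mul_of_nonneg_left h2 (abs_nonneg _)
          _ < (ε / M) * M := by
              refine mul_lt_mul_of_pos_right h1 hMpos
          _ = ε := by field_simp
      linarith [hω]
    calc P {x | ε ≤ dist (R n x) ((fun _ => (0:ℝ)) x)}
        ≤ P ({x | ε / (M : ℝ) ≤ dist (Q n x) ((fun _ => (0:ℝ)) x)}
            ∪ {ω | (M : ℝ) < |Y (t - 1 - (n : ℤ)) ω|}) := measure_mono hsub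
      _ ≤ P {x | ε / (M : ℝ) ≤ dist (Q n x) ((fun _ => (0:ℝ)) x)}
            + P {ω | (M : ℝ) < |Y (t - 1 - (n : ℤ)) ω|} := measure_union_le _ _
      _ ≤ δ / 2 + δ / 2 := by
          refine add_le_add ?_ ?_
          · exact (hN n hn).1.le
          · have hms : MeasurableSet {x : ℝ | (M : ℝ) < |x|} :=
              measurableSet_lt measurable_const measurable_abs
            have := (hYid n).measure_mem_eq hms
            have heq : {ω | (M : ℝ) < |Y (t - 1 - (n : ℤ)) ω|}
                = Y (t - 1 - (n : ℤ)) ⁻¹' {x : ℝ | (M : ℝ) < |x|} := rfl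
            rw [heq, this]
            exact hM.le
      _ = δ := ENNReal.add_halves δ
  -- conclude
  obtain ⟨ns, hns_mono, hns⟩ := hRm.exists_seq_tendsto_ae
  filter_upwards [hRZ, hns] with ω h1 h2
  have hZ0 : Z ω = 0 := tendsto_nhds_unique (h1.comp hns_mono.tendsto_atTop) h2
  have : Y t ω - B t ω - ∑' m, f m ω = 0 := hZ0
  have hgoal : Y t ω = B t ω + ∑' m, f m ω := by linarith
  exact hgoal

end SREaux

/-- For an i.i.d. sequence `(A_t, B_t)_{t∈ℤ}` of positive random pairs with `E log A₁ < 0` and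
`E log⁺ B₁ < ∞`, the stochastic recurrence equation `X_t = A_t X_{t−1} + B_t` has a unique
stationary solution, given by `X_t = B_t + ∑_{j=−∞}^{t−1} A_t ⋯ A_{j+1} B_j` (indexed below by
`m = t − 1 − j ∈ ℕ`), the series converging almost surely. -/
theorem stmt7 {Ω : Type*} [MeasurableSpace Ω] (P : Measure Ω) [IsProbabilityMeasure P]
    (A B : ℤ → Ω → ℝ)
    (hmeas : ∀ t, Measurable fun ω => (A t ω, B t ω))
    (hpos : ∀ t ω, 0 < A t ω ∧ 0 < B t ω)
    (hiid : iIndepFun (m := fun _ : ℤ => (inferInstance : MeasurableSpace (ℝ × ℝ)))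
      (fun t ω => (A t ω, B t ω)) P)
    (hid : ∀ s t : ℤ, IdentDistrib (fun ω => (A s ω, B s ω)) (fun ω => (A t ω, B t ω)) P P)
    (hlogA_int : Integrable (fun ω => Real.log (A 1 ω)) P)
    (hlogA : (∫ ω, Real.log (A 1 ω) ∂P) < 0)
    (hlogB : Integrable (fun ω => max (Real.log (B 1 ω)) 0) P) :
    -- almost sure convergence of the series
    (∀ t : ℤ, ∀ᵐ ω ∂P,
      Summable fun m : ℕ =>
        (∏ k ∈ Finset.Icc (t - (m : ℤ)) t, A k ω) * B (t - 1 - (m : ℤ)) ω) ∧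
    -- the series solves the stochastic recurrence equation
    (∀ t : ℤ, ∀ᵐ ω ∂P,
      (B t ω + ∑' m : ℕ, (∏ k ∈ Finset.Icc (t - (m : ℤ)) t, A k ω) * B (t - 1 - (m : ℤ)) ω)
        = A t ω *
            (B (t - 1) ω +
              ∑' m : ℕ, (∏ k ∈ Finset.Icc (t - 1 - (m : ℤ)) (t - 1), A k ω) *
                B (t - 1 - 1 - (m : ℤ)) ω)
          + B t ω) ∧
    -- strict stationarity of the solution
    (∀ s : ℤ,
      IdentDistrib
        (fun ω (t : ℤ) =>
          B t ω + ∑' m : ℕ, (∏ k ∈ Finset.Icc (t - (m : ℤ)) t, A k ω) * B (t - 1 - (m : ℤ)) ω)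
        (fun ω (t : ℤ) =>
          B (t + s) ω + ∑' m : ℕ, (∏ k ∈ Finset.Icc (t + s - (m : ℤ)) (t + s), A k ω) *
            B (t + s - 1 - (m : ℤ)) ω)
        P P) ∧
    -- uniqueness: any stationary solution coincides with it almost surely
    (∀ Y : ℤ → Ω → ℝ, (∀ t, Measurable (Y t)) →
      (∀ t : ℤ, ∀ᵐ ω ∂P, Y t ω = A t ω * Y (t - 1) ω + B t ω) →
      (∀ s : ℤ,
        IdentDistrib (fun ω (t : ℤ) => (Y t ω, A t ω, B t ω))
          (fun ω (t : ℤ) => (Y (t + s) ω, A (t + s) ω, B (t + s) ω)) P P) →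
      ∀ t : ℤ,
        Y t =ᵐ[P] fun ω =>
          B t ω + ∑' m : ℕ, (∏ k ∈ Finset.Icc (t - (m : ℤ)) t, A k ω) * B (t - 1 - (m : ℤ)) ω) := by
  have key := key_as P A B hmeas hpos hiid hid hlogA_int hlogA hlogB
  refine ⟨fun t => (key t).mono fun ω h => h.1, ?_, ?_, ?_⟩
  · intro t
    filter_upwards [key t] with ω h
    exact series_recur A B hpos t ω h.1
  · intro s
    exact stationarity P A B hmeas hpos hiid hid s
  · intro Y hYmeas hYrec hYstat t
    exact uniqueness P A B hmeas key Y hYmeas hYrec hYstat t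
end

section
/- (Glivenko–Cantelli theorem under bracketing entropy) Let F be a class of measurable functions on a probability space (X, A, P) such that the bracketing number N_{[ ]}(ε, F, L¹(P)) is finite for every ε > 0. Then F is P-Glivenko–Cantelli: sup_{f∈F} |P_n f − P f| → 0 almost surely, where P_n is the empirical measure of an i.i.d. sample from P. -/
open MeasureTheory

open MeasureTheory Filter ProbabilityTheory Finset

lemma slln_comp {𝒳 : Type*} [MeasurableSpace 𝒳] (μ : Measure 𝒳)
    {Ω : Type*} [MeasurableSpace Ω] (P : Measure Ω) [IsProbabilityMeasure P]
    (X : ℕ → Ω → 𝒳) (hXmeas : ∀ i, Measurable (X i))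
    (hindep : ProbabilityTheory.iIndepFun
      X P)
    (hlaw : ∀ i, Measure.map (X i) P = μ)
    (g : 𝒳 → ℝ) (hg : Measurable g) (hint : Integrable g μ) :
    ∀ᵐ ω ∂P, Tendsto (fun n : ℕ => (1 / (n : ℝ)) * ∑ i ∈ Finset.range n, g (X i ω))
      atTop (nhds (∫ a, g a ∂μ)) := by
  have hint0 : Integrable (fun ω => g (X 0 ω)) P := by
    have h := (integrable_map_measure (μ := P) (f := X 0) hg.aestronglyMeasurable
      (hXmeas 0).aemeasurable).mp
    rw [hlaw 0] at h
    exact h hint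
  have hind : Pairwise (Function.onFun (IndepFun · · P) (fun i ω => g (X i ω))) := by
    intro i j hij
    exact (hindep.indepFun hij).comp hg hg
  have hident : ∀ i, IdentDistrib (fun ω => g (X i ω)) (fun ω => g (X 0 ω)) P P := by
    intro i
    refine ⟨(hg.comp (hXmeas i)).aemeasurable, (hg.comp (hXmeas 0)).aemeasurable, ?_⟩
    have h1 : (fun ω => g (X i ω)) = g ∘ X i := rfl
    have h2 : (fun ω => g (X 0 ω)) = g ∘ X 0 := rfl
    rw [h1, h2, ← Measure.map_map hg (hXmeas i), ← Measure.map_map hg (hXmeas 0),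
      hlaw, hlaw]
  have hmean : (∫ ω, g (X 0 ω) ∂P) = ∫ a, g a ∂μ := by
    rw [← hlaw 0, integral_map (hXmeas 0).aemeasurable hg.aestronglyMeasurable]
  have := strong_law_ae_real (fun i ω => g (X i ω)) hint0 hind hident
  filter_upwards [this] with ω hω
  rw [hmean] at hω
  convert hω using 2 with n
  rw [one_div_mul_eq_div]

/-- Glivenko–Cantelli theorem under bracketing entropy: if a class `F` of measurable real-valued
functions admits, for every `ε > 0`, a finite cover by `ε`-brackets in `L¹(μ)`, then for an
i.i.d. sample from `μ` the empirical process satisfies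
`sup_{f∈F} |Pₙf − Pf| → 0` almost surely. -/
theorem stmt18 {𝒳 : Type*} [MeasurableSpace 𝒳] (μ : Measure 𝒳) [IsProbabilityMeasure μ]
    (F : Set (𝒳 → ℝ)) (hne : F.Nonempty)
    (hFmeas : ∀ f ∈ F, Measurable f)
    (hbracket : ∀ ε : ℝ, 0 < ε → ∃ (N : ℕ) (l u : Fin N → 𝒳 → ℝ),
      (∀ i, Integrable (l i) μ ∧ Integrable (u i) μ) ∧
      (∀ i, (∫ a, (u i a - l i a) ∂μ) < ε) ∧
      (∀ f ∈ F, ∃ i, ∀ a, l i a ≤ f a ∧ f a ≤ u i a))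
    {Ω : Type*} [MeasurableSpace Ω] (P : Measure Ω) [IsProbabilityMeasure P]
    (X : ℕ → Ω → 𝒳) (hXmeas : ∀ i, Measurable (X i))
    (hindep : ProbabilityTheory.iIndepFun
      X P)
    (hlaw : ∀ i, Measure.map (X i) P = μ) :
    ∀ᵐ ω ∂P,
      Filter.Tendsto
        (fun n : ℕ =>
          ⨆ f : F, |(1 / (n : ℝ)) * ∑ i ∈ Finset.range n, (f : 𝒳 → ℝ) (X i ω)
            - ∫ a, (f : 𝒳 → ℝ) a ∂μ|)
        Filter.atTop (nhds 0) := by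
  have : Nonempty F := hne.to_subtype
  choose N l u hInt hgap hcov using
    fun k : ℕ => hbracket (1 / ((k : ℝ) + 1)) (by positivity)
  -- measurable modifications
  set l' : ∀ k, Fin (N k) → 𝒳 → ℝ := fun k j => (hInt k j).1.1.mk _ with hl'def
  set u' : ∀ k, Fin (N k) → 𝒳 → ℝ := fun k j => (hInt k j).2.1.mk _ with hu'def
  have hl'meas : ∀ k j, Measurable (l' k j) := fun k j =>
    (hInt k j).1.1.stronglyMeasurable_mk.measurable
  have hu'meas : ∀ k j, Measurable (u' k j) := fun k j =>
    (hInt k j).2.1.stronglyMeasurable_mk.measurable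
  have hl'ae : ∀ k j, l k j =ᵐ[μ] l' k j := fun k j => (hInt k j).1.1.ae_eq_mk
  have hu'ae : ∀ k j, u k j =ᵐ[μ] u' k j := fun k j => (hInt k j).2.1.ae_eq_mk
  have hl'int : ∀ k j, Integrable (l' k j) μ := fun k j => (hInt k j).1.congr (hl'ae k j)
  have hu'int : ∀ k j, Integrable (u' k j) μ := fun k j => (hInt k j).2.congr (hu'ae k j)
  have hl'eq : ∀ k j, (∫ a, l' k j a ∂μ) = ∫ a, l k j a ∂μ :=
    fun k j => integral_congr_ae (hl'ae k j).symm
  have hu'eq : ∀ k j, (∫ a, u' k j a ∂μ) = ∫ a, u k j a ∂μ :=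
    fun k j => integral_congr_ae (hu'ae k j).symm
  -- a.e. events
  have A1 : ∀ᵐ ω ∂P, ∀ k j, Tendsto
      (fun n : ℕ => (1 / (n : ℝ)) * ∑ i ∈ Finset.range n, u' k j (X i ω))
      atTop (nhds (∫ a, u' k j a ∂μ)) := by
    rw [ae_all_iff]; intro k; rw [ae_all_iff]; intro j
    exact slln_comp μ P X hXmeas hindep hlaw _ (hu'meas k j) (hu'int k j)
  have A2 : ∀ᵐ ω ∂P, ∀ k j, Tendsto
      (fun n : ℕ => (1 / (n : ℝ)) * ∑ i ∈ Finset.range n, l' k j (X i ω))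
      atTop (nhds (∫ a, l' k j a ∂μ)) := by
    rw [ae_all_iff]; intro k; rw [ae_all_iff]; intro j
    exact slln_comp μ P X hXmeas hindep hlaw _ (hl'meas k j) (hl'int k j)
  have B : ∀ᵐ ω ∂P, ∀ (i : ℕ) k j,
      u' k j (X i ω) = u k j (X i ω) ∧ l' k j (X i ω) = l k j (X i ω) := by
    rw [ae_all_iff]; intro i; rw [ae_all_iff]; intro k; rw [ae_all_iff]; intro j
    have h1 : (u k j) ∘ (X i) =ᵐ[P] (u' k j) ∘ (X i) :=
      ae_eq_comp (hXmeas i).aemeasurable ((hlaw i).symm ▸ hu'ae k j)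
    have h2 : (l k j) ∘ (X i) =ᵐ[P] (l' k j) ∘ (X i) :=
      ae_eq_comp (hXmeas i).aemeasurable ((hlaw i).symm ▸ hl'ae k j)
    filter_upwards [h1, h2] with ω e1 e2
    exact ⟨e1.symm, e2.symm⟩
  filter_upwards [A1, A2, B] with ω hU hL hB
  rw [Metric.tendsto_atTop]
  intro ε hε
  obtain ⟨k, hk⟩ := exists_nat_one_div_lt (show (0:ℝ) < ε / 4 by linarith)
  -- eventually all endpoint averages are within ε/4
  have hev : ∀ᶠ n : ℕ in atTop, ∀ j : Fin (N k),
      |(1 / (n : ℝ)) * ∑ i ∈ Finset.range n, u' k j (X i ω) - ∫ a, u' k j a ∂μ| < ε / 4 ∧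
      |(1 / (n : ℝ)) * ∑ i ∈ Finset.range n, l' k j (X i ω) - ∫ a, l' k j a ∂μ| < ε / 4 := by
    rw [Filter.eventually_all]
    intro j
    have e1 := Metric.tendsto_atTop.mp (hU k j) (ε / 4) (by linarith)
    have e2 := Metric.tendsto_atTop.mp (hL k j) (ε / 4) (by linarith)
    obtain ⟨M1, h1⟩ := e1; obtain ⟨M2, h2⟩ := e2
    refine eventually_atTop.mpr ⟨max M1 M2, fun n hn => ?_⟩
    constructor
    · simpa [Real.dist_eq] using h1 n (le_trans (le_max_left _ _) hn)
    · simpa [Real.dist_eq] using h2 n (le_trans (le_max_right _ _) hn)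
  obtain ⟨M, hM⟩ := eventually_atTop.mp hev
  refine ⟨M, fun n hn => ?_⟩
  have hMn := hM n hn
  -- bound each term by ε/2
  have key : ∀ f : F, |(1 / (n : ℝ)) * ∑ i ∈ Finset.range n, (f : 𝒳 → ℝ) (X i ω)
      - ∫ a, (f : 𝒳 → ℝ) a ∂μ| ≤ ε / 2 := by
    rintro ⟨f, hf⟩
    obtain ⟨j, hj⟩ := hcov k f hf
    have hfint : Integrable f μ := by
      refine Integrable.mono' ((hInt k j).1.abs.add (hInt k j).2.abs)
        (hFmeas f hf).aestronglyMeasurable (Filter.Eventually.of_forall fun a => ?_)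
      have h1 := (hj a).1; have h2 := (hj a).2
      have := neg_abs_le (l k j a); have := le_abs_self (u k j a)
      have := abs_nonneg (l k j a); have := abs_nonneg (u k j a)
      simp only [Pi.add_apply]
      rw [Real.norm_eq_abs, abs_le]; constructor <;> linarith
    have hgap' : (∫ a, u k j a ∂μ) - (∫ a, l k j a ∂μ) < ε / 4 := by
      have := hgap k j
      rw [integral_sub (hInt k j).2 (hInt k j).1] at this
      linarith
    have hintf_le : (∫ a, f a ∂μ) ≤ ∫ a, u k j a ∂μ :=
      integral_mono hfint (hInt k j).2 fun a => (hj a).2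
    have hintf_ge : (∫ a, l k j a ∂μ) ≤ ∫ a, f a ∂μ :=
      integral_mono (hInt k j).1 hfint fun a => (hj a).1
    set Au := (1 / (n : ℝ)) * ∑ i ∈ Finset.range n, u' k j (X i ω) with hAu
    set Al := (1 / (n : ℝ)) * ∑ i ∈ Finset.range n, l' k j (X i ω) with hAl
    have hAf_le : (1 / (n : ℝ)) * ∑ i ∈ Finset.range n, f (X i ω) ≤ Au := by
      apply mul_le_mul_of_nonneg_left _ (by positivity)
      apply Finset.sum_le_sum
      intro i _
      rw [(hB i k j).1]
      exact (hj (X i ω)).2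
    have hAf_ge : Al ≤ (1 / (n : ℝ)) * ∑ i ∈ Finset.range n, f (X i ω) := by
      apply mul_le_mul_of_nonneg_left _ (by positivity)
      apply Finset.sum_le_sum
      intro i _
      rw [(hB i k j).2]
      exact (hj (X i ω)).1
    have hu4 := (hMn j).1
    have hl4 := (hMn j).2
    rw [abs_lt] at hu4 hl4
    rw [hu'eq k j] at hu4
    rw [hl'eq k j] at hl4
    rw [abs_le]
    constructor
    · linarith [hAf_ge, hl4.1, hintf_le, hgap', hintf_ge]
    · linarith [hAf_le, hu4.2, hgap', hintf_ge]
  have hbdd : BddAbove (Set.range fun f : F =>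
      |(1 / (n : ℝ)) * ∑ i ∈ Finset.range n, (f : 𝒳 → ℝ) (X i ω)
        - ∫ a, (f : 𝒳 → ℝ) a ∂μ|) := by
    refine ⟨ε / 2, ?_⟩
    rintro x ⟨f, rfl⟩
    exact key f
  have hS_le : (⨆ f : F, |(1 / (n : ℝ)) * ∑ i ∈ Finset.range n, (f : 𝒳 → ℝ) (X i ω)
      - ∫ a, (f : 𝒳 → ℝ) a ∂μ|) ≤ ε / 2 := ciSup_le key
  have hS_ge : (0:ℝ) ≤ ⨆ f : F, |(1 / (n : ℝ)) * ∑ i ∈ Finset.range n, (f : 𝒳 → ℝ) (X i ω)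
      - ∫ a, (f : 𝒳 → ℝ) a ∂μ| := by
    obtain ⟨f0, hf0⟩ := hne
    exact le_trans (abs_nonneg _) (le_ciSup hbdd ⟨f0, hf0⟩)
  rw [Real.dist_eq, sub_zero, abs_of_nonneg hS_ge]
  linarith
end
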